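/- Let ν₀ > 0 and 1 < p < 2, and let S(A) = ν₀(1+|A|²)^{(p-2)/2} A on symmetric 2×2 matrices. Then there is a constant C > 0 depending only on p and ν₀ such that for all symmetric 2×2 matrices A, B: ∑_{k,l} (S_{kl}(A) - S_{kl}(B))(A_{kl} - B_{kl}) ≥ C (1 + |A|² + |B|²)^{(p-2)/2} |A - B|². -/

import Mathlib

open Finset

/-- Frobenius norm squared of a 2×2 real matrix. -/
def frobSq (A : Matrix (Fin 2) (Fin 2) ℝ) : ℝ := ∑ i, ∑ j, (A i j) ^ 2

/-- The power-law stress tensor S(A) = ν₀ (1+|A|²)^{(p-2)/2} A. -/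
noncomputable def Spow (ν₀ p : ℝ) (A : Matrix (Fin 2) (Fin 2) ℝ) : Matrix (Fin 2) (Fin 2) ℝ :=
  fun k l => ν₀ * (1 + frobSq A) ^ ((p - 2) / 2) * A k l

section Aux
open Real Set

lemma deriv_aux (ν₀ p : ℝ) (x : ℝ) :
    HasDerivAt (fun x : ℝ => ν₀ * (1 + x ^ 2) ^ ((p-2)/2) * x)
      (ν₀ * ((2*x) * ((p-2)/2) * (1 + x^2) ^ ((p-2)/2 - 1) * x + (1 + x^2) ^ ((p-2)/2))) x := by
  have h1 : HasDerivAt (fun x : ℝ => 1 + x ^ 2) (2*x) x := by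
    simpa using (hasDerivAt_pow 2 x).const_add 1
  have h2 := (h1.rpow_const (p := (p-2)/2) (Or.inl (by positivity))).mul (hasDerivAt_id x)
  have h3 := h2.const_mul ν₀
  simpa only [Pi.mul_apply, id_eq, mul_one, ← mul_assoc] using h3

lemma scalar_aux (ν₀ p : ℝ) (hν : 0 < ν₀) (hp1 : 1 < p) (hp2 : p < 2)
    (a b : ℝ) (hb : 0 ≤ b) (hba : b ≤ a) :
    (ν₀ * (1 + a^2) ^ ((p-2)/2) * a - ν₀ * (1 + b^2) ^ ((p-2)/2) * b) * (a - b)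
      ≥ ν₀ * (p-1) * (1 + a^2 + b^2) ^ ((p-2)/2) * (a-b)^2 := by
  rcases eq_or_lt_of_le hba with rfl | hlt
  · norm_num
  set q := (p-2)/2 with hq
  set f : ℝ → ℝ := fun x => ν₀ * (1 + x ^ 2) ^ q * x with hf
  set D : ℝ → ℝ := fun x => ν₀ * ((2*x) * q * (1 + x^2) ^ (q - 1) * x + (1 + x^2) ^ q) with hD
  have hder : ∀ x : ℝ, HasDerivAt f (D x) x := fun x => deriv_aux ν₀ p x
  have hcont : ContinuousOn f (Icc b a) :=
    (fun x _ => (hder x).continuousAt.continuousWithinAt)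
  obtain ⟨c, hc, hceq⟩ := exists_hasDerivAt_eq_slope f D hlt hcont (fun x _ => hder x)
  have hslope : f a - f b = D c * (a - b) := by
    have hne : a - b ≠ 0 := sub_ne_zero.mpr hlt.ne'
    rw [eq_div_iff hne] at hceq
    linarith [hceq]
  have hc0 : 0 < c := lt_of_le_of_lt hb hc.1
  have hca : c < a := hc.2
  have hu : (0:ℝ) < 1 + c^2 := by positivity
  have hqle : q ≤ 0 := by rw [hq]; linarith
  have hsplit : (1 + c^2) ^ q = (1 + c^2) ^ (q-1) * (1 + c^2) := by
    have h := Real.rpow_add hu (q-1) 1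
    rw [Real.rpow_one] at h
    rw [← h]; ring_nf
  have hDc : D c ≥ ν₀ * (p-1) * (1 + a^2 + b^2) ^ q := by
    have h1 : D c = ν₀ * ((1 + c^2) ^ (q-1) * (1 + (p-1)*c^2)) := by
      simp only [hD]; rw [hsplit, hq]; ring
    have h2 : (1 + (p-1)*c^2) ≥ (p-1) * (1 + c^2) := by nlinarith [sq_nonneg c]
    have h3 : (0:ℝ) < (1 + c^2) ^ (q-1) := Real.rpow_pos_of_pos hu _
    have h4 : ν₀ * ((1 + c^2) ^ (q-1) * (1 + (p-1)*c^2))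
        ≥ ν₀ * ((1 + c^2) ^ (q-1) * ((p-1) * (1 + c^2))) := by
      apply mul_le_mul_of_nonneg_left _ hν.le
      exact mul_le_mul_of_nonneg_left h2 h3.le
    have h5 : (1 + c^2) ^ (q-1) * ((p-1) * (1 + c^2)) = (p-1) * (1 + c^2)^q := by
      rw [hsplit]; ring
    have h6 : (1 + a^2 + b^2) ^ q ≤ (1 + c^2) ^ q := by
      apply Real.rpow_le_rpow_of_nonpos hu _ hqle
      nlinarith [sq_nonneg b, hc0, hca]
    rw [h1]
    calc ν₀ * (p-1) * (1 + a^2 + b^2) ^ q ≤ ν₀ * (p-1) * (1 + c^2) ^ q := by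
          apply mul_le_mul_of_nonneg_left h6 (by nlinarith)
      _ = ν₀ * ((1 + c^2) ^ (q-1) * ((p-1) * (1 + c^2))) := by rw [h5]; ring
      _ ≤ ν₀ * ((1 + c^2) ^ (q-1) * (1 + (p-1)*c^2)) := h4
  have key : (f a - f b) * (a - b) ≥ ν₀ * (p-1) * (1 + a^2 + b^2) ^ q * (a-b)^2 := by
    rw [hslope]
    have : D c * (a-b) * (a-b) = D c * (a-b)^2 := by ring
    rw [this]
    exact mul_le_mul_of_nonneg_right hDc (sq_nonneg _)
  simpa [hf] using key

lemma scalar_sym (ν₀ p : ℝ) (hν : 0 < ν₀) (hp1 : 1 < p) (hp2 : p < 2)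
    (a b : ℝ) (ha : 0 ≤ a) (hb : 0 ≤ b) :
    (ν₀ * (1 + a^2) ^ ((p-2)/2) * a - ν₀ * (1 + b^2) ^ ((p-2)/2) * b) * (a - b)
      ≥ ν₀ * (p-1) * (1 + a^2 + b^2) ^ ((p-2)/2) * (a-b)^2 := by
  rcases le_total b a with h | h
  · exact scalar_aux ν₀ p hν hp1 hp2 a b hb h
  · have := scalar_aux ν₀ p hν hp1 hp2 b a ha h
    rw [show (1:ℝ) + b^2 + a^2 = 1 + a^2 + b^2 by ring] at this
    nlinarith [this]

lemma assemble (ν₀ p : ℝ) (hν : 0 < ν₀) (hp1 : 1 < p) (hp2 : p < 2)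
    (SA SB IP L : ℝ) (hSA : 0 ≤ SA) (hSB : 0 ≤ SB) (hCS : IP^2 ≤ SA * SB)
    (hL : L = ν₀ * (1+SA)^((p-2)/2) * SA + ν₀ * (1+SB)^((p-2)/2) * SB
      - (ν₀ * (1+SA)^((p-2)/2) + ν₀ * (1+SB)^((p-2)/2)) * IP) :
    L ≥ ν₀ * (p-1) * (1 + SA + SB) ^ ((p-2)/2) * (SA + SB - 2*IP) := by
  set q := (p-2)/2 with hq
  have hqle : q ≤ 0 := by rw [hq]; linarith
  set a := Real.sqrt SA with hadef
  set b := Real.sqrt SB with hbdef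
  have ha : 0 ≤ a := Real.sqrt_nonneg _
  have hb : 0 ≤ b := Real.sqrt_nonneg _
  have ha2 : a^2 = SA := Real.sq_sqrt hSA
  have hb2 : b^2 = SB := Real.sq_sqrt hSB
  have hIP : IP ≤ a * b := by
    nlinarith [hCS, ha2, hb2, mul_nonneg ha hb, sq_nonneg (a*b - IP), sq_nonneg (a*b + IP)]
  have key := scalar_sym ν₀ p hν hp1 hp2 a b ha hb
  rw [ha2, hb2] at key
  have hψ0 : (0:ℝ) ≤ (1 + SA + SB) ^ q := (Real.rpow_pos_of_pos (by linarith) _).le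
  have hφA : (1 + SA + SB) ^ q ≤ (1 + SA) ^ q :=
    Real.rpow_le_rpow_of_nonpos (by linarith) (by linarith) hqle
  have hφB : (1 + SA + SB) ^ q ≤ (1 + SB) ^ q :=
    Real.rpow_le_rpow_of_nonpos (by linarith) (by linarith) hqle
  have h1 : ν₀ * (1 + SA + SB) ^ q ≤ ν₀ * (1 + SA) ^ q :=
    mul_le_mul_of_nonneg_left hφA hν.le
  have h2 : ν₀ * (1 + SA + SB) ^ q ≤ ν₀ * (1 + SB) ^ q :=
    mul_le_mul_of_nonneg_left hφB hν.le
  have h3 : ν₀ * (p-1) * (1 + SA + SB) ^ q ≤ ν₀ * (1 + SA + SB) ^ q := by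
    apply mul_le_mul_of_nonneg_right _ hψ0
    nlinarith
  have hbr : 0 ≤ ν₀ * (1+SA)^q + ν₀ * (1+SB)^q - 2*(ν₀*(p-1))*(1+SA+SB)^q := by
    linarith
  have hprod : 0 ≤ (a*b - IP) * (ν₀ * (1+SA)^q + ν₀ * (1+SB)^q - 2*(ν₀*(p-1))*(1+SA+SB)^q) :=
    mul_nonneg (by linarith) hbr
  have hid : L - ν₀ * (p-1) * (1 + SA + SB) ^ q * (SA + SB - 2*IP)
      = ((ν₀ * (1+SA)^q * a - ν₀ * (1+SB)^q * b) * (a-b)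
          - ν₀ * (p-1) * (1 + SA + SB) ^ q * (a-b)^2)
        + (a*b - IP) * (ν₀ * (1+SA)^q + ν₀ * (1+SB)^q - 2*(ν₀*(p-1))*(1+SA+SB)^q) := by
    rw [hL, ← ha2, ← hb2]; ring
  linarith [key, hprod, hid]

end Aux

theorem stmt13 (ν₀ p : ℝ) (hν : 0 < ν₀) (hp1 : 1 < p) (hp2 : p < 2) :
    ∃ C > (0 : ℝ), ∀ A B : Matrix (Fin 2) (Fin 2) ℝ, A.IsSymm → B.IsSymm →
      ∑ k, ∑ l, (Spow ν₀ p A k l - Spow ν₀ p B k l) * (A k l - B k l)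
        ≥ C * (1 + frobSq A + frobSq B) ^ ((p - 2) / 2) * frobSq (A - B) := by
  refine ⟨ν₀ * (p-1), by nlinarith, ?_⟩
  intro A B _ _
  have hSA : 0 ≤ frobSq A := by
    unfold frobSq; positivity
  have hSB : 0 ≤ frobSq B := by
    unfold frobSq; positivity
  have hCS : (∑ k, ∑ l, A k l * B k l)^2 ≤ frobSq A * frobSq B := by
    simp only [frobSq, Fin.sum_univ_two]
    nlinarith [sq_nonneg (A 0 0 * B 0 1 - A 0 1 * B 0 0),
      sq_nonneg (A 0 0 * B 1 0 - A 1 0 * B 0 0),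
      sq_nonneg (A 0 0 * B 1 1 - A 1 1 * B 0 0),
      sq_nonneg (A 0 1 * B 1 0 - A 1 0 * B 0 1),
      sq_nonneg (A 0 1 * B 1 1 - A 1 1 * B 0 1),
      sq_nonneg (A 1 0 * B 1 1 - A 1 1 * B 1 0)]
  have hL : ∑ k, ∑ l, (Spow ν₀ p A k l - Spow ν₀ p B k l) * (A k l - B k l)
      = ν₀ * (1 + frobSq A)^((p-2)/2) * frobSq A + ν₀ * (1 + frobSq B)^((p-2)/2) * frobSq B
        - (ν₀ * (1 + frobSq A)^((p-2)/2) + ν₀ * (1 + frobSq B)^((p-2)/2))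
            * (∑ k, ∑ l, A k l * B k l) := by
    simp only [Spow, frobSq, Fin.sum_univ_two]
    ring
  have hsub : frobSq (A - B) = frobSq A + frobSq B - 2 * (∑ k, ∑ l, A k l * B k l) := by
    simp only [frobSq, Matrix.sub_apply, Fin.sum_univ_two]
    ring
  have := assemble ν₀ p hν hp1 hp2 (frobSq A) (frobSq B) (∑ k, ∑ l, A k l * B k l)
    (∑ k, ∑ l, (Spow ν₀ p A k l - Spow ν₀ p B k l) * (A k l - B k l)) hSA hSB hCS hL
  rw [hsub]
  convert this using 3
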